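/- Let B be the integral closure of A = F_q[T] in the splitting field E of x^2 - cx + μP^m over K = F_q(T), where μ ∈ F_q^*, P ∤ c, and deg c ≤ md/2 with md ≥ 2. Then no root θ of this polynomial is a unit of B. -/

import Mathlib

open Polynomial

noncomputable section

variable (Fq : Type) [Field Fq] [Fintype Fq]

set_option synthInstance.maxHeartbeats 1000000
set_option maxHeartbeats 1000000

instance (f : Polynomial (RatFunc Fq)) : Algebra (Polynomial Fq) f.SplittingField :=
  ((algebraMap (RatFunc Fq) f.SplittingField).comp
    (algebraMap (Polynomial Fq) (RatFunc Fq))).toAlgebra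

section Aux

variable {Fq : Type} [Field Fq]

private lemma aux_no_unit (K E : Type) [Field K] [Field E]
    [Algebra (Polynomial Fq) K] [IsFractionRing (Polynomial Fq) K]
    [Algebra K E] [Algebra (Polynomial Fq) E] [IsScalarTower (Polynomial Fq) K E]
    (P : Polynomial Fq) (hP : Irreducible P) (d m : ℕ) (hd : P.natDegree = d)
    (hm : 0 < m) (hmd : 2 ≤ m * d) (μ : Fqˣ) (c : Polynomial Fq)
    (hdeg : 2 * c.natDegree ≤ m * d)
    (θ η : E) (hθint : IsIntegral (Polynomial Fq) θ)
    (hηint : IsIntegral (Polynomial Fq) η) (hθη : θ * η = 1)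
    (hθ : θ ^ 2 - algebraMap (Polynomial Fq) E c * θ
        + algebraMap (Polynomial Fq) E ((μ : Fq) • P ^ m) = 0) : False := by
  have injE : Function.Injective (algebraMap K E) := (algebraMap K E).injective
  have injAK : Function.Injective (algebraMap (Polynomial Fq) K) :=
    IsFractionRing.injective (Polynomial Fq) K
  have injAE : Function.Injective (algebraMap (Polynomial Fq) E) := by
    rw [IsScalarTower.algebraMap_eq (Polynomial Fq) K E]; exact injE.comp injAK
  set u : Polynomial Fq := (μ : Fq) • P ^ m with hu
  have huCP : u = Polynomial.C (μ : Fq) * P ^ m := by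
    rw [hu, Polynomial.smul_eq_C_mul]
  have hu0 : u ≠ 0 := by
    rw [huCP]
    exact mul_ne_zero (by simpa using μ.ne_zero) (pow_ne_zero _ hP.ne_zero)
  have hundeg : u.natDegree = m * d := by
    rw [huCP, Polynomial.natDegree_C_mul (by simpa using μ.ne_zero),
      Polynomial.natDegree_pow, hd]
  have hclt : c.natDegree < m * d := by omega
  have hθ0 : θ ≠ 0 := by
    intro h0; rw [h0, zero_mul] at hθη; exact zero_ne_one hθη
  have hη0 : η ≠ 0 := by
    intro h0; rw [h0, mul_zero] at hθη; exact zero_ne_one hθη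
  have hηinv : η = θ⁻¹ := eq_inv_of_mul_eq_one_right hθη
  by_cases hKmem : ∃ t : K, algebraMap K E t = θ
  · -- Case A : θ comes from K, hence from Fq[X]
    obtain ⟨t, ht⟩ := hKmem
    have ht0 : t ≠ 0 := by rintro rfl; exact hθ0 (by simpa using ht.symm)
    have htint : IsIntegral (Polynomial Fq) t := by
      rw [← isIntegral_algebraMap_iff injE, ht]; exact hθint
    obtain ⟨a, ha⟩ := IsIntegrallyClosed.isIntegral_iff.mp htint
    have hηt : η = algebraMap K E t⁻¹ := by
      rw [hηinv, ← ht, map_inv₀]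
    have htinvint : IsIntegral (Polynomial Fq) t⁻¹ := by
      rw [← isIntegral_algebraMap_iff injE, ← hηt]; exact hηint
    obtain ⟨b, hb⟩ := IsIntegrallyClosed.isIntegral_iff.mp htinvint
    have hab : a * b = 1 := by
      apply injAK
      rw [map_mul, ha, hb, map_one, mul_inv_cancel₀ ht0]
    have haE : algebraMap (Polynomial Fq) E a = θ := by
      rw [IsScalarTower.algebraMap_apply (Polynomial Fq) K E, ha, ht]
    have heqA : a ^ 2 - c * a + u = 0 := by
      apply injAE
      rw [map_zero, map_add, map_sub, map_pow, map_mul, haE]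
      exact hθ
    have haunit : IsUnit a := IsUnit.of_mul_eq_one (a := a) b hab
    obtain ⟨r0, hr00, hr0C⟩ := Polynomial.isUnit_iff.mp haunit
    have hueq : u = c * a - a ^ 2 := by linear_combination heqA
    have hle : u.natDegree ≤ c.natDegree := by
      rw [hueq]
      refine le_trans (Polynomial.natDegree_sub_le _ _) ?_
      have h1 : (c * a).natDegree ≤ c.natDegree := by
        rw [← hr0C, Polynomial.natDegree_mul_C hr00.ne_zero]
      have h2 : (a ^ 2).natDegree = 0 := by
        rw [← hr0C, ← Polynomial.C_pow, Polynomial.natDegree_C]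
      omega
    rw [hundeg] at hle
    omega
  · -- Case B : θ does not come from K
    set c' : K := algebraMap (Polynomial Fq) K c with hc'
    set u' : K := algebraMap (Polynomial Fq) K u with hu'
    have hu'0 : u' ≠ 0 := by
      rw [hu']; exact (map_ne_zero_iff _ injAK).mpr hu0
    set r : Polynomial K := X ^ 2 + C (-(c' / u')) * X + C u'⁻¹ with hr
    have hrmonic : r.Monic := by
      rw [hr]
      monicity!
    have hrdeg : r.natDegree = 2 := by
      rw [hr]
      compute_degree!
    have hcE : algebraMap (Polynomial Fq) E c = algebraMap K E c' := by
      rw [hc', ← IsScalarTower.algebraMap_apply (Polynomial Fq) K E]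
    have huE : algebraMap (Polynomial Fq) E u = algebraMap K E u' := by
      rw [hu', ← IsScalarTower.algebraMap_apply (Polynomial Fq) K E]
    have hroot : Polynomial.aeval η r = 0 := by
      rw [hr]
      simp only [map_add, map_mul, map_pow, Polynomial.aeval_X, Polynomial.aeval_C]
      rw [hηinv]
      have hu'E : algebraMap K E u' ≠ 0 := fun h0 => hu'0 (injE (by simpa using h0))
      rw [map_neg, map_div₀, map_inv₀]
      rw [hcE, huE] at hθ
      field_simp
      linear_combination hθ
    have hηintK : IsIntegral K η := hηint.tower_top
    have hdvd : minpoly K η ∣ r := minpoly.dvd K η hroot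
    have hmindeg : (minpoly K η).natDegree ≤ 2 := by
      have := Polynomial.natDegree_le_of_dvd hdvd hrmonic.ne_zero
      omega
    have hminpos : 0 < (minpoly K η).natDegree := minpoly.natDegree_pos hηintK
    have hmonicmin : (minpoly K η).Monic := minpoly.monic hηintK
    have hne1 : (minpoly K η).natDegree ≠ 1 := by
      intro h1
      have heq := hmonicmin.eq_X_add_C h1
      have haev : Polynomial.aeval η (minpoly K η) = 0 := minpoly.aeval K η
      rw [heq] at haev
      simp only [map_add, Polynomial.aeval_X, Polynomial.aeval_C] at haev
      have hηK : η = algebraMap K E (-(minpoly K η).coeff 0) := by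
        rw [map_neg]; exact eq_neg_of_add_eq_zero_left haev
      exact hKmem ⟨(-(minpoly K η).coeff 0)⁻¹, by
        rw [map_inv₀, ← hηK, hηinv, inv_inv]⟩
    have hminr : r = minpoly K η := by
      refine Polynomial.eq_of_monic_of_dvd_of_natDegree_le hmonicmin hrmonic hdvd ?_
      omega
    have hmap : minpoly K η = (minpoly (Polynomial Fq) η).map (algebraMap (Polynomial Fq) K) :=
      minpoly.isIntegrallyClosed_eq_field_fractions' K hηint
    have hcoeff : algebraMap (Polynomial Fq) K ((minpoly (Polynomial Fq) η).coeff 0) = u'⁻¹ := by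
      have hco := congrArg (fun p => Polynomial.coeff p 0) (hminr.trans hmap)
      simp only [Polynomial.coeff_map] at hco
      rw [← hco, hr]
      simp
    have huunit : IsUnit u := by
      refine IsUnit.of_mul_eq_one (a := u) ((minpoly (Polynomial Fq) η).coeff 0) ?_
      apply injAK
      rw [map_mul, hcoeff, map_one, hu', mul_inv_cancel₀ hu'0]
    have hPu : P ∣ u := by
      rw [huCP]
      exact Dvd.dvd.mul_left (dvd_pow_self P hm.ne') _
    exact hP.not_isUnit (isUnit_of_dvd_unit hPu huunit)

end Aux

instance towerInst (f : Polynomial (RatFunc Fq)) :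
    @IsScalarTower (Polynomial Fq) (RatFunc Fq) f.SplittingField
      Algebra.toSMul Algebra.toSMul Algebra.toSMul :=
  IsScalarTower.of_algebraMap_eq' rfl

/-- Let `B` be the integral closure of `A = F_q[T]` in the splitting field `E` of
`x² - c·x + μ·P^m` over `K = F_q(T)`, where `μ ∈ F_qˣ`, `P ∤ c`, `deg c ≤ md/2`
and `md ≥ 2`.  Then no root `θ` of this polynomial is a unit of `B`. -/
theorem root_not_unit_of_integral_closure
    (P : Polynomial Fq) (hP : Irreducible P) (d m : ℕ) (hd : P.natDegree = d)
    (hm : 0 < m) (hmd : 2 ≤ m * d)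
    (μ : Fqˣ) (c : Polynomial Fq) (hc : ¬ P ∣ c) (hdeg : 2 * c.natDegree ≤ m * d) :
    ∀ θ : (X ^ 2 - C (algebraMap (Polynomial Fq) (RatFunc Fq) c) * X
            + C (algebraMap (Polynomial Fq) (RatFunc Fq) ((μ : Fq) • P ^ m))
            : Polynomial (RatFunc Fq)).SplittingField,
      θ ^ 2 - algebraMap (Polynomial Fq) _ c * θ
          + algebraMap (Polynomial Fq) _ ((μ : Fq) • P ^ m) = 0 →
      ∀ hmem : θ ∈ integralClosure (Polynomial Fq) _,
        ¬ IsUnit (⟨θ, hmem⟩ : integralClosure (Polynomial Fq) _) := by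
  intro θ hθ hmem h
  obtain ⟨v, hv⟩ := h
  have hθη : θ * (v⁻¹).val.val = 1 := by
    have h1 := congrArg Subtype.val v.mul_inv
    rw [hv] at h1
    simpa using h1
  exact aux_no_unit (RatFunc Fq) _ P hP d m hd hm hmd μ c hdeg θ
    (v⁻¹).val.val hmem (v⁻¹).val.2 hθη hθ
end
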